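/- In the graph G on ℕ₊ with edges {{u,v} : 2u ≤ v}, if A is a vertex-cover with A ≠ ℕ₊, x = min(ℕ₊ \ A), and y = max(ℕ₊ \ A) (which exists), then (A ∪ {x}) \ {y+1, y+2} is also a vertex-cover of G, and it has strictly smaller symmetric-difference deficit: it removes 2 elements while adding 1. -/
import Mathlib


/-- A vertex-cover of the graph `G` on the positive integers with edges `{u,v}` for
`u < v` and `2u ≤ v`: a set of positive integers meeting every such edge. -/
def IsCoverG (A : Set ℕ) : Prop :=
  A ⊆ {n | 0 < n} ∧ ∀ u v : ℕ, 0 < u → u < v → 2 * u ≤ v → u ∈ A ∨ v ∈ A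

/-- If `A ≠ ℕ₊` is a vertex-cover of `G`, `x` the least and `y` the greatest positive
integer not in `A`, then `(A ∪ {x}) \ {y+1, y+2}` is again a vertex-cover; it removes
two elements from `A` while adding one. -/
theorem stmt_7 (A : Set ℕ) (hA : IsCoverG A) (x y : ℕ)
    (hx : 0 < x) (hxA : x ∉ A) (hxmin : ∀ z, 0 < z → z ∉ A → x ≤ z)
    (hy : 0 < y) (hyA : y ∉ A) (hymax : ∀ z, 0 < z → z ∉ A → z ≤ y) :
    IsCoverG ((A ∪ {x}) \ {y + 1, y + 2}) ∧
      (A \ ((A ∪ {x}) \ {y + 1, y + 2})).ncard = 2 ∧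
      (((A ∪ {x}) \ {y + 1, y + 2}) \ A).ncard = 1 := by
  have hxy : x ≤ y := hxmin y hy hyA
  have hy1A : y + 1 ∈ A := by
    by_contra h
    have := hymax (y + 1) (by omega) h
    omega
  have hy2A : y + 2 ∈ A := by
    by_contra h
    have := hymax (y + 2) (by omega) h
    omega
  have h2x : y < 2 * x := by
    by_contra h
    push_neg at h
    rcases hA.2 x y hx (by omega) h with h' | h' <;> [exact hxA h'; exact hyA h']
  refine ⟨⟨?_, ?_⟩, ?_, ?_⟩
  · intro n hn
    rcases hn.1 with h | h
    · exact hA.1 h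
    · simp only [Set.mem_singleton_iff] at h
      simpa [h] using hx
  · intro u v hu huv h2u
    by_contra hboth
    push_neg at hboth
    obtain ⟨hU, hV⟩ := hboth
    simp only [Set.mem_diff, Set.mem_union, Set.mem_insert_iff,
      Set.mem_singleton_iff, not_and, not_not, not_or] at hU hV
    by_cases hvA : v ∈ A ∨ v = x
    · -- then v ∈ {y+1, y+2}
      have hv12 := hV hvA
      by_cases huA : u ∈ A ∨ u = x
      · have hu12 := hU huA
        omega
      · push_neg at huA
        have hux : x ≤ u := hxmin u hu huA.1
        omega
    · push_neg at hvA
      have hvy : v ≤ y := hymax v (by omega) hvA.1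
      by_cases huA : u ∈ A ∨ u = x
      · have hu12 := hU huA
        omega
      · push_neg at huA
        rcases hA.2 u v hu huv h2u with h | h
        · exact huA.1 h
        · exact hvA.1 h
  · have : A \ ((A ∪ {x}) \ {y + 1, y + 2}) = {y + 1, y + 2} := by
      ext n
      simp only [Set.mem_diff, Set.mem_union, Set.mem_insert_iff,
        Set.mem_singleton_iff, not_and, not_not, not_or]
      constructor
      · rintro ⟨hnA, h⟩
        have := h (Or.inl hnA)
        tauto
      · rintro (rfl | rfl)
        · exact ⟨hy1A, fun _ _ => by omega⟩
        · exact ⟨hy2A, fun _ _ => rfl⟩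
    rw [this]
    exact Set.ncard_pair (by omega)
  · have : ((A ∪ {x}) \ {y + 1, y + 2}) \ A = {x} := by
      ext n
      simp only [Set.mem_diff, Set.mem_union, Set.mem_insert_iff,
        Set.mem_singleton_iff, not_or]
      constructor
      · rintro ⟨⟨hn | rfl, _⟩, hnA⟩
        · exact absurd hn hnA
        · rfl
      · rintro rfl
        exact ⟨⟨Or.inr rfl, by omega, by omega⟩, hxA⟩
    rw [this]
    exact Set.ncard_singleton x
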